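/- Suppose m ≥ 1, no inner knot has multiplicity greater than m, and fix j with 0 ≤ j ≤ n−1 such that t_j < t_{j+1}. Then for every i with j − m ≤ i ≤ j and every k with 0 ≤ k ≤ m, the adjusted Bernstein–Bézier coefficients over the knot span [t_j, t_{j+1}) satisfy b_{m,k}^{(i,j)} = ((m−k)/m)·( (t_j − t_i)/(t_{m+i} − t_i)·b_{m−1,k}^{(i,j)} + (t_{m+i+1} − t_j)/(t_{m+i+1} − t_{i+1})·b_{m−1,k}^{(i+1,j)} ) + (k/m)·( (t_{j+1} − t_i)/(t_{m+i} − t_i)·b_{m−1,k−1}^{(i,j)} + (t_{m+i+1} − t_{j+1})/(t_{m+i+1} − t_{i+1})·b_{m−1,k−1}^{(i+1,j)} ), where a fraction whose denominator vanishes is replaced by 0, and where a coefficient b_{p,ℓ}^{(q,j)} is taken to be 0 whenever ℓ < 0, ℓ > p, q < j − p, or q > j. -/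

import Mathlib

/-- The B-spline basis functions `N_{p,i}` of degree `p` over the knot
sequence `t`, defined by the de Boor–Cox recursion, with the conventions that
a fraction with vanishing denominator is replaced by `0` (automatic for real
division in Lean) and that `N_{p,q} ≡ 0` whenever `q < -p` or `q ≥ n`. -/
noncomputable def bspline (t : ℤ → ℝ) (n : ℕ) : ℕ → ℤ → ℝ → ℝ
  | 0 => fun i u =>
      if 0 ≤ i ∧ i < (n : ℤ) ∧ t i ≤ u ∧ u < t (i + 1) then 1 else 0
  | p + 1 => fun i u =>
      if -((p : ℤ) + 1) ≤ i ∧ i < (n : ℤ) then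
        (u - t i) / (t ((p : ℤ) + 1 + i) - t i) * bspline t n p i u
          + (t ((p : ℤ) + 1 + i + 1) - u) / (t ((p : ℤ) + 1 + i + 1) - t (i + 1))
              * bspline t n p (i + 1) u
      else 0

/-- The `k`-th Bernstein basis polynomial of degree `p`. -/
noncomputable def bern (p k : ℕ) (x : ℝ) : ℝ :=
  (p.choose k : ℝ) * x ^ k * (1 - x) ^ (p - k)

lemma bspline_eq_zero_left (t : ℤ → ℝ) (n : ℕ) :
    ∀ (p : ℕ) (i : ℤ) (u : ℝ), (∀ q : ℤ, i ≤ q → q ≤ i + p → u < t q) →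
      bspline t n p i u = 0 := by
  intro p
  induction p with
  | zero =>
    intro i u h
    rw [bspline]; beta_reduce; rw [if_neg]
    rintro ⟨-, -, h3, -⟩
    exact absurd (h i le_rfl (by simp)) (not_lt.2 h3)
  | succ p ih =>
    intro i u h
    rw [bspline]; beta_reduce; rw [ih i u (fun q h1 h2 => h q h1 (by omega)),
      ih (i+1) u (fun q h1 h2 => h q (by omega) (by omega))]
    simp

lemma bspline_eq_zero_right (t : ℤ → ℝ) (n : ℕ) :
    ∀ (p : ℕ) (i : ℤ) (u : ℝ), (∀ q : ℤ, i + 1 ≤ q → q ≤ i + p + 1 → t q ≤ u) →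
      bspline t n p i u = 0 := by
  intro p
  induction p with
  | zero =>
    intro i u h
    rw [bspline]; beta_reduce; rw [if_neg]
    rintro ⟨-, -, -, h4⟩
    exact absurd (h (i+1) le_rfl (by omega)) (not_le.2 h4)
  | succ p ih =>
    intro i u h
    rw [bspline]; beta_reduce; rw [ih i u (fun q h1 h2 => h q h1 (by omega)),
      ih (i+1) u (fun q h1 h2 => h q (by omega) (by omega))]
    simp

open Polynomial in
lemma bern_coeffs_eq_zero (p : ℕ) (c : ℕ → ℝ)
    (h : ∀ x ∈ Set.Ico (0:ℝ) 1, ∑ k ∈ Finset.range (p+1), c k * bern p k x = 0) :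
    ∀ k ≤ p, c k = 0 := by
  set P : Polynomial ℝ :=
    ∑ k ∈ Finset.range (p+1),
      Polynomial.C (c k * (p.choose k : ℝ)) * ((1 - Polynomial.X) ^ (p - k) * Polynomial.X ^ k)
    with hP
  have heval : ∀ x : ℝ, P.eval x = ∑ k ∈ Finset.range (p+1), c k * bern p k x := by
    intro x
    rw [hP, Polynomial.eval_finset_sum]
    refine Finset.sum_congr rfl fun k _ => ?_
    simp [bern]; ring
  have hP0 : P = 0 := by
    refine Polynomial.eq_zero_of_infinite_isRoot P ?_
    refine Set.Infinite.mono ?_ (Set.Ico_infinite (by norm_num : (0:ℝ) < 1))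
    intro x hx
    simp only [Set.mem_setOf_eq, Polynomial.IsRoot, heval x, h x hx]
  intro K
  induction K using Nat.strong_induction_on with
  | _ K ih =>
    intro hK
    have hcoeff : P.coeff K = 0 := by rw [hP0]; simp
    rw [hP, Polynomial.finset_sum_coeff] at hcoeff
    rw [Finset.sum_eq_single K] at hcoeff
    · rw [Polynomial.coeff_C_mul, Polynomial.coeff_mul_X_pow'] at hcoeff
      simp only [le_refl, if_pos, Nat.sub_self] at hcoeff
      have h1 : ((1 - Polynomial.X : Polynomial ℝ) ^ (p - K)).coeff 0 = 1 := by
        rw [Polynomial.coeff_zero_eq_eval_zero]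
        simp
      rw [h1, mul_one] at hcoeff
      have hne : (p.choose K : ℝ) ≠ 0 := Nat.cast_ne_zero.mpr (Nat.choose_pos hK).ne'
      exact (mul_eq_zero.mp hcoeff).resolve_right hne
    · intro k hk hne
      rw [Polynomial.coeff_C_mul, Polynomial.coeff_mul_X_pow']
      rcases lt_or_gt_of_ne hne with hlt | hgt
      · rw [ih k hlt (by omega)]; simp
      · rw [if_neg (by omega)]
        ring
    · intro hKmem
      exact absurd (Finset.mem_range.mpr (by omega)) hKmem

lemma bern_one_sub_mul (q k : ℕ) (hk : k ≤ q) (X : ℝ) :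
    (1 - X) * bern q k X = (((q:ℝ)+1-k)/((q:ℝ)+1)) * bern (q+1) k X := by
  have hc : ((q:ℝ)+1) * (q.choose k : ℝ) = (((q:ℝ)+1) - k) * ((q+1).choose k : ℝ) := by
    have h1 := Nat.add_one_mul_choose_eq q k
    have h2 := Nat.choose_succ_right_eq (q+1) k
    have h3 : (q+1) * q.choose k = (q+1).choose k * (q+1-k) := by omega
    have h4 := congrArg (Nat.cast : ℕ → ℝ) h3
    push_cast [Nat.cast_sub (by omega : k ≤ q+1)] at h4
    linarith
  have hq : ((q:ℝ)+1) ≠ 0 := by positivity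
  unfold bern
  have hsub : q + 1 - k = (q - k) + 1 := by omega
  rw [hsub, pow_succ, div_mul_eq_mul_div, eq_div_iff hq]
  linear_combination (X^k * (1-X)^(q-k) * (1-X)) * hc

lemma bern_x_mul (q k : ℕ) (X : ℝ) :
    X * bern q k X = (((k:ℝ)+1)/((q:ℝ)+1)) * bern (q+1) (k+1) X := by
  have hc : ((q:ℝ)+1) * (q.choose k : ℝ) = (((k:ℝ)+1)) * ((q+1).choose (k+1) : ℝ) := by
    have h1 := Nat.add_one_mul_choose_eq q k
    have h4 := congrArg (Nat.cast : ℕ → ℝ) h1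
    push_cast at h4
    linarith
  have hq : ((q:ℝ)+1) ≠ 0 := by positivity
  unfold bern
  have hsub : q + 1 - (k + 1) = q - k := by omega
  rw [hsub, pow_succ, div_mul_eq_mul_div, eq_div_iff hq]
  linear_combination (X^k * X * (1-X)^(q-k)) * hc

lemma sum_raise (q : ℕ) (e : ℕ → ℝ) (A0 B0 X : ℝ) :
    (A0 * (1-X) + B0 * X) * ∑ k ∈ Finset.range (q+1), e k * bern q k X
      = ∑ k ∈ Finset.range (q+2),
          ((((q:ℝ)+1-k)/((q:ℝ)+1)) * A0 * (if k ≤ q then e k else 0)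
            + ((k:ℝ)/((q:ℝ)+1)) * B0 * (if 1 ≤ k then e (k-1) else 0)) * bern (q+1) k X := by
  have hsplit : ∀ k ∈ Finset.range (q+2),
      ((((q:ℝ)+1-k)/((q:ℝ)+1)) * A0 * (if k ≤ q then e k else 0)
            + ((k:ℝ)/((q:ℝ)+1)) * B0 * (if 1 ≤ k then e (k-1) else 0)) * bern (q+1) k X
        = (((q:ℝ)+1-k)/((q:ℝ)+1)) * A0 * (if k ≤ q then e k else 0) * bern (q+1) k X
            + ((k:ℝ)/((q:ℝ)+1)) * B0 * (if 1 ≤ k then e (k-1) else 0) * bern (q+1) k X := by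
    intro k _; ring
  rw [Finset.sum_congr rfl hsplit, Finset.sum_add_distrib]
  have hA : A0 * (1-X) * ∑ k ∈ Finset.range (q+1), e k * bern q k X
      = ∑ k ∈ Finset.range (q+2),
          (((q:ℝ)+1-k)/((q:ℝ)+1)) * A0 * (if k ≤ q then e k else 0) * bern (q+1) k X := by
    conv_rhs => rw [Finset.sum_range_succ]
    rw [if_neg (by omega), mul_zero, zero_mul, add_zero, Finset.mul_sum]
    refine Finset.sum_congr rfl fun k hk => ?_
    rw [if_pos (Nat.lt_succ_iff.mp (Finset.mem_range.mp hk)),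
      show A0 * (1-X) * (e k * bern q k X) = A0 * e k * ((1-X) * bern q k X) by ring,
      bern_one_sub_mul q k (Nat.lt_succ_iff.mp (Finset.mem_range.mp hk)) X]
    ring
  have hB : B0 * X * ∑ k ∈ Finset.range (q+1), e k * bern q k X
      = ∑ k ∈ Finset.range (q+2),
          ((k:ℝ)/((q:ℝ)+1)) * B0 * (if 1 ≤ k then e (k-1) else 0) * bern (q+1) k X := by
    conv_rhs => rw [Finset.sum_range_succ']
    simp only [Nat.cast_zero, zero_div, zero_mul, add_zero]
    rw [Finset.mul_sum]
    refine Finset.sum_congr rfl fun k hk => ?_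
    rw [if_pos (by omega : 1 ≤ k + 1)]
    rw [show B0 * X * (e k * bern q k X) = B0 * e k * (X * bern q k X) by ring,
      bern_x_mul q k X, Nat.add_sub_cancel]
    push_cast
    ring
  rw [add_mul, hA, hB]

/-- the degree-raising (de Boor–Cox type) recurrence for the
adjusted Bernstein–Bézier coefficients over a non-empty knot span
`[t_j, t_{j+1})`:
`b_{m,k}^{(i,j)} = ((m−k)/m)·((t_j − t_i)/(t_{m+i} − t_i)·b_{m−1,k}^{(i,j)}
      + (t_{m+i+1} − t_j)/(t_{m+i+1} − t_{i+1})·b_{m−1,k}^{(i+1,j)})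
   + (k/m)·((t_{j+1} − t_i)/(t_{m+i} − t_i)·b_{m−1,k−1}^{(i,j)}
      + (t_{m+i+1} − t_{j+1})/(t_{m+i+1} − t_{i+1})·b_{m−1,k−1}^{(i+1,j)})`,
where a fraction with vanishing denominator is `0` (automatic for real
division), and `bb p q ℓ` extends `b_{p,ℓ}^{(q,j)}` by `0` whenever `ℓ < 0`,
`ℓ > p`, `q < j − p` or `q > j`. -/
theorem bspline_bezier_deBoorCox_recurrence
    (m n : ℕ) (hm : 1 ≤ m) (hn : 1 ≤ n) (t : ℤ → ℝ)
    (hmono : ∀ k l : ℤ, -(m : ℤ) ≤ k → k ≤ l → l ≤ (n : ℤ) + m → t k ≤ t l)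
    (h0n : t 0 < t n)
    (hmult : ∀ r : ℤ, 1 ≤ r → r ≤ (n : ℤ) - 1 →
      ((Finset.Icc (-(m : ℤ)) ((n : ℤ) + m)).filter (fun k => t k = t r)).card ≤ m)
    (j : ℤ) (hj1 : 0 ≤ j) (hj2 : j ≤ (n : ℤ) - 1) (hspan : t j < t (j + 1))
    (b : ℕ → ℤ → ℕ → ℝ)
    (hb : ∀ p : ℕ, ∀ i : ℤ, ∀ u ∈ Set.Ico (t j) (t (j + 1)),
      bspline t n p i u
        = ∑ k ∈ Finset.range (p + 1),
            b p i k * bern p k ((u - t j) / (t (j + 1) - t j)))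
    (bb : ℕ → ℤ → ℤ → ℝ)
    (hbb : ∀ (p : ℕ) (q ℓ : ℤ),
      bb p q ℓ = if ℓ < 0 ∨ (p : ℤ) < ℓ ∨ q < j - (p : ℤ) ∨ j < q then 0
                 else b p q ℓ.toNat)
    (i : ℤ) (hi1 : j - m ≤ i) (hi2 : i ≤ j)
    (k : ℕ) (hk : k ≤ m) :
    b m i k
      = (((m : ℝ) - k) / m)
          * ((t j - t i) / (t ((m : ℤ) + i) - t i) * bb (m - 1) i k
              + (t ((m : ℤ) + i + 1) - t j) / (t ((m : ℤ) + i + 1) - t (i + 1))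
                  * bb (m - 1) (i + 1) k)
        + ((k : ℝ) / m)
            * ((t (j + 1) - t i) / (t ((m : ℤ) + i) - t i) * bb (m - 1) i ((k : ℤ) - 1)
                + (t ((m : ℤ) + i + 1) - t (j + 1)) / (t ((m : ℤ) + i + 1) - t (i + 1))
                    * bb (m - 1) (i + 1) ((k : ℤ) - 1)) := by
  obtain ⟨p, rfl⟩ : ∃ p, m = p + 1 := ⟨m - 1, by omega⟩
  simp only [Nat.add_sub_cancel]
  have hΔ : (0:ℝ) < t (j+1) - t j := sub_pos.2 hspan
  push_cast at hi1
  have hjn : j ≤ (n:ℤ) - 1 := hj2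
  set c : ℕ → ℝ := fun k =>
    (((p:ℝ)+1-(k:ℝ))/((p:ℝ)+1))
        * ((t j - t i) / (t ((p:ℤ)+1+i) - t i) * bb p i (k:ℤ)
            + (t ((p:ℤ)+1+i+1) - t j) / (t ((p:ℤ)+1+i+1) - t (i+1)) * bb p (i+1) (k:ℤ))
      + ((k:ℝ)/((p:ℝ)+1))
          * ((t (j+1) - t i) / (t ((p:ℤ)+1+i) - t i) * bb p i ((k:ℤ)-1)
              + (t ((p:ℤ)+1+i+1) - t (j+1)) / (t ((p:ℤ)+1+i+1) - t (i+1)) * bb p (i+1) ((k:ℤ)-1))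
    with hc
  -- Step 1: degree-p expansions with the extended coefficients bb
  have S1 : ∀ u ∈ Set.Ico (t j) (t (j+1)), bspline t n p i u
      = ∑ k ∈ Finset.range (p+1), bb p i (k:ℤ) * bern p k ((u - t j)/(t (j+1) - t j)) := by
    intro u hu
    by_cases hcase : j - (p:ℤ) ≤ i
    · rw [hb p i u hu]
      refine Finset.sum_congr rfl fun k hk => ?_
      have hkp : k ≤ p := by have := Finset.mem_range.mp hk; omega
      rw [hbb p i (k:ℤ), if_neg (by push_cast; omega)]
      simp
    · rw [bspline_eq_zero_right t n p i u ?_]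
      · symm
        refine Finset.sum_eq_zero fun k hk => ?_
        rw [hbb p i (k:ℤ), if_pos (Or.inr (Or.inr (Or.inl (by omega)))), zero_mul]
      · intro q hq1 hq2
        refine le_trans (hmono q j ?_ ?_ ?_) hu.1
        · push_cast; omega
        · omega
        · push_cast; omega
  have S2 : ∀ u ∈ Set.Ico (t j) (t (j+1)), bspline t n p (i+1) u
      = ∑ k ∈ Finset.range (p+1), bb p (i+1) (k:ℤ) * bern p k ((u - t j)/(t (j+1) - t j)) := by
    intro u hu
    by_cases hcase : i + 1 ≤ j
    · rw [hb p (i+1) u hu]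
      refine Finset.sum_congr rfl fun k hk => ?_
      have hkp : k ≤ p := by have := Finset.mem_range.mp hk; omega
      rw [hbb p (i+1) (k:ℤ), if_neg (by push_cast; omega)]
      simp
    · rw [bspline_eq_zero_left t n p (i+1) u ?_]
      · symm
        refine Finset.sum_eq_zero fun k hk => ?_
        rw [hbb p (i+1) (k:ℤ), if_pos (Or.inr (Or.inr (Or.inr (by omega)))), zero_mul]
      · intro q hq1 hq2
        refine lt_of_lt_of_le hu.2 (hmono (j+1) q ?_ ?_ ?_)
        · push_cast; omega
        · omega
        · push_cast; omega
  -- Step 2: key identity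
  have hkey : ∀ u ∈ Set.Ico (t j) (t (j+1)), bspline t n (p+1) i u
      = ∑ k ∈ Finset.range (p+2), c k * bern (p+1) k ((u - t j)/(t (j+1) - t j)) := by
    intro u hu
    have hXu : (u - t j)/(t (j+1) - t j) * (t (j+1) - t j) = u - t j :=
      div_mul_cancel₀ _ hΔ.ne'
    rw [bspline]
    beta_reduce
    rw [if_pos ⟨by push_cast; omega, by omega⟩, S1 u hu, S2 u hu]
    have hA : (u - t i) / (t ((p:ℤ)+1+i) - t i)
        = (t j - t i)/(t ((p:ℤ)+1+i) - t i) * (1 - (u - t j)/(t (j+1) - t j))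
          + (t (j+1) - t i)/(t ((p:ℤ)+1+i) - t i) * ((u - t j)/(t (j+1) - t j)) := by
      rw [div_mul_eq_mul_div, div_mul_eq_mul_div, ← add_div]
      congr 1
      linear_combination -hXu
    have hB : (t ((p:ℤ)+1+i+1) - u) / (t ((p:ℤ)+1+i+1) - t (i+1))
        = (t ((p:ℤ)+1+i+1) - t j)/(t ((p:ℤ)+1+i+1) - t (i+1))
            * (1 - (u - t j)/(t (j+1) - t j))
          + (t ((p:ℤ)+1+i+1) - t (j+1))/(t ((p:ℤ)+1+i+1) - t (i+1))
              * ((u - t j)/(t (j+1) - t j)) := by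
      rw [div_mul_eq_mul_div, div_mul_eq_mul_div, ← add_div]
      congr 1
      linear_combination hXu
    rw [hA, hB,
      sum_raise p (fun k => bb p i (k:ℤ)) _ _ ((u - t j)/(t (j+1) - t j)),
      sum_raise p (fun k => bb p (i+1) (k:ℤ)) _ _ ((u - t j)/(t (j+1) - t j)),
      ← Finset.sum_add_distrib]
    refine Finset.sum_congr rfl fun k hk => ?_
    rw [← add_mul]
    congr 1
    simp only [hc]
    by_cases hkp : k ≤ p
    · rw [if_pos hkp, if_pos hkp]
      by_cases hk1 : 1 ≤ k
      · rw [if_pos hk1, if_pos hk1, show ((k-1:ℕ):ℤ) = (k:ℤ) - 1 by omega]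
        ring
      · rw [if_neg hk1, if_neg hk1]
        have hk0 : k = 0 := by omega
        subst hk0
        push_cast
        ring
    · have hkp1 : k = p + 1 := by have := Finset.mem_range.mp hk; omega
      subst hkp1
      rw [if_neg hkp, if_neg hkp, if_pos (by omega : 1 ≤ p + 1),
        if_pos (by omega : 1 ≤ p + 1), Nat.add_sub_cancel,
        hbb p i ((p+1:ℕ):ℤ), if_pos (by push_cast; omega),
        hbb p (i+1) ((p+1:ℕ):ℤ), if_pos (by push_cast; omega),
        show ((p+1:ℕ):ℤ) - 1 = (p:ℤ) by omega]
      push_cast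
      ring
  -- Step 3: uniqueness of Bernstein coefficients
  have huniq : ∀ k' ≤ p + 1, b (p+1) i k' - c k' = 0 := by
    apply bern_coeffs_eq_zero (p+1) (fun k' => b (p+1) i k' - c k')
    intro Y hY
    set u : ℝ := t j + Y * (t (j+1) - t j) with hudef
    have hmem : u ∈ Set.Ico (t j) (t (j+1)) := by
      constructor
      · have : 0 ≤ Y * (t (j+1) - t j) := mul_nonneg hY.1 hΔ.le
        simp [hudef]; linarith
      · have : Y * (t (j+1) - t j) < 1 * (t (j+1) - t j) :=
          mul_lt_mul_of_pos_right hY.2 hΔ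
        simp [hudef]; linarith
    have hXu : (u - t j)/(t (j+1) - t j) = Y := by
      rw [hudef]
      field_simp
      ring
    have h1 := hb (p+1) i u hmem
    have h2 := hkey u hmem
    rw [hXu] at h1 h2
    simp only [sub_mul, Finset.sum_sub_distrib]
    rw [← h1, ← h2]
    exact sub_self _
  have hfin := huniq k (by omega)
  rw [sub_eq_zero] at hfin
  rw [hfin, hc]
  push_cast
  ring
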